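/- Let a ≥ 0 and b > 0 be real numbers with a ≠ b, and let c be a complex number with c² = a² − b² (so c ≠ 0). Then for every t ≥ 0: |exp(−a·t)·cosh(c·t)| ≤ 2 and |exp(−a·t)·sinh(c·t)/c| ≤ 2/max(a, b), where cosh and sinh are the complex hyperbolic functions. -/

import Mathlib

private lemma texp_le (a t : ℝ) (ha : 0 < a) (ht : 0 ≤ t) :
    t * Real.exp (-(a * t)) ≤ 1 / a := by
  rw [Real.exp_neg, ← div_eq_mul_inv, div_le_div_iff₀ (Real.exp_pos _) ha]
  have h := Real.add_one_le_exp (a * t)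
  nlinarith

private lemma sinh_kernel_bound (a u t : ℝ) (hu : 0 < u) (hua : u < a) (ht : 0 ≤ t) :
    Real.exp (-(a * t)) * Real.sinh (u * t) / u ≤ 2 / a := by
  have ha : 0 < a := lt_trans hu hua
  have key : Real.exp (-(a * t)) * Real.sinh (u * t) / u
      = Real.exp (-((a - u) * t)) * (1 - Real.exp (-(2 * u * t))) / (2 * u) := by
    have h1 : Real.exp (-((a - u) * t)) = Real.exp (-(a * t)) * Real.exp (u * t) := by
      rw [← Real.exp_add]; ring_nf
    have h2 : Real.exp (-(2 * u * t)) = Real.exp (-(u * t)) * Real.exp (-(u * t)) := by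
      rw [← Real.exp_add]; ring_nf
    have h3 : Real.exp (u * t) * Real.exp (-(u * t)) = 1 := by
      rw [← Real.exp_add]; simp
    rw [Real.sinh_eq, h1, h2]
    field_simp
    have h3' : Real.exp (t * u) * Real.exp (-(t * u)) = 1 := by rw [← Real.exp_add]; simp
    linear_combination (Real.exp (-(t * u))) * h3'
  rw [key]
  have hE1 : Real.exp (-((a - u) * t)) ≤ 1 := by
    rw [Real.exp_le_one_iff]; nlinarith
  have hEpos : (0:ℝ) < Real.exp (-((a - u) * t)) := Real.exp_pos _
  have hepos : (0:ℝ) < Real.exp (-(2 * u * t)) := Real.exp_pos _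
  have hele : Real.exp (-(2 * u * t)) ≤ 1 := by rw [Real.exp_le_one_iff]; nlinarith
  rcases le_or_gt a (2 * u) with hcase | hcase
  · have hprod : Real.exp (-((a - u) * t)) * (1 - Real.exp (-(2 * u * t))) ≤ 1 :=
      mul_le_one₀ hE1 (by linarith) (by linarith)
    have hprodnn : 0 ≤ Real.exp (-((a - u) * t)) * (1 - Real.exp (-(2 * u * t))) := by
      apply mul_nonneg hEpos.le; linarith
    rw [div_le_div_iff₀ (by linarith) ha]
    nlinarith
  · have h1 : 1 - Real.exp (-(2 * u * t)) ≤ 2 * u * t := by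
      have := Real.add_one_le_exp (-(2 * u * t)); linarith
    calc Real.exp (-((a - u) * t)) * (1 - Real.exp (-(2 * u * t))) / (2 * u)
        ≤ Real.exp (-((a - u) * t)) * (2 * u * t) / (2 * u) := by
          gcongr
      _ = t * Real.exp (-((a - u) * t)) := by field_simp
      _ ≤ 1 / (a - u) := texp_le (a - u) t (by linarith) ht
      _ ≤ 2 / a := by rw [div_le_div_iff₀ (by linarith) ha]; nlinarith

private lemma sin_kernel_bound (a b θ t : ℝ) (ha : 0 ≤ a) (hb : 0 < b) (hθ : 0 < θ)
    (h : θ ^ 2 = b ^ 2 - a ^ 2) (ht : 0 ≤ t) :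
    Real.exp (-(a * t)) * |Real.sin (θ * t)| / θ ≤ 2 / b := by
  have hE1 : Real.exp (-(a * t)) ≤ 1 := by rw [Real.exp_le_one_iff]; nlinarith
  have hEpos : (0:ℝ) < Real.exp (-(a * t)) := Real.exp_pos _
  rcases le_or_gt (b / 2) θ with hcase | hcase
  · have hs : |Real.sin (θ * t)| ≤ 1 := abs_le.mpr ⟨Real.neg_one_le_sin _, Real.sin_le_one _⟩
    calc Real.exp (-(a * t)) * |Real.sin (θ * t)| / θ ≤ 1 * 1 / θ := by
          gcongr
      _ ≤ 2 / b := by rw [div_le_div_iff₀ hθ hb]; nlinarith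
  · have ha' : b / 2 < a := by nlinarith
    have ha0 : 0 < a := by linarith
    have hs : |Real.sin (θ * t)| ≤ θ * t := by
      have h2 := Real.abs_sin_le_abs (x := θ * t)
      exact h2.trans_eq (abs_of_nonneg (by positivity))
    calc Real.exp (-(a * t)) * |Real.sin (θ * t)| / θ
        ≤ Real.exp (-(a * t)) * (θ * t) / θ := by gcongr
      _ = t * Real.exp (-(a * t)) := by field_simp
      _ ≤ 1 / a := texp_le a t ha0 ht
      _ ≤ 2 / b := by rw [div_le_div_iff₀ ha0 hb]; nlinarith

/-- Uniform-in-time bounds on the oscillatory kernels in the zero-mode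
analysis: for `a ≥ 0`, `b > 0`, `a ≠ b` and `c² = a² − b²` (`c ≠ 0`),
`|e^{−at}·cosh(ct)| ≤ 2` and `|e^{−at}·sinh(ct)/c| ≤ 2/max(a,b)`. -/
theorem oscillatory_kernel_bounds
    (a b : ℝ) (ha : 0 ≤ a) (hb : 0 < b) (hab : a ≠ b)
    (c : ℂ) (hc2 : c ^ 2 = (a:ℂ) ^ 2 - (b:ℂ) ^ 2) (hc : c ≠ 0) :
    ∀ t : ℝ, 0 ≤ t →
      ‖Complex.exp (-(a:ℂ) * t) * Complex.cosh (c * t)‖ ≤ 2 ∧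
        ‖Complex.exp (-(a:ℂ) * t) * Complex.sinh (c * t) / c‖ ≤
          2 / max a b := by
  intro t ht
  set x := c.re with hx
  set y := c.im with hy
  have him : x * y = 0 := by
    have := congrArg Complex.im hc2
    simp [pow_two, Complex.mul_im, ← hx, ← hy] at this
    linarith
  have hre : x ^ 2 - y ^ 2 = a ^ 2 - b ^ 2 := by
    have := congrArg Complex.re hc2
    simp [pow_two, Complex.mul_re, ← hx, ← hy] at this
    nlinarith [this]
  -- |Re c| ≤ a
  have hx2 : x ^ 2 ≤ a ^ 2 := by
    rcases mul_eq_zero.mp him with h | h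
    · rw [h]; nlinarith [sq_nonneg a]
    · rw [h] at hre; nlinarith
  have hxa : |x| ≤ a := by nlinarith [sq_abs x, abs_nonneg x]
  have hEabs : ‖Complex.exp (-(a:ℂ) * t)‖ = Real.exp (-(a * t)) := by
    rw [Complex.norm_exp]; congr 1; simp
  constructor
  · -- cosh bound
    have hct : (c * (t:ℂ)).re = x * t := by simp [Complex.mul_re, ← hx, ← hy]
    have hcosh : ‖Complex.cosh (c * t)‖ ≤ Real.cosh (x * t) := by
      have hceq : Complex.cosh (c * t) = (Complex.exp (c * t) + Complex.exp (-(c * t))) / 2 := by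
        have h2c := Complex.two_cosh (x := c * t)
        linear_combination h2c / 2
      rw [hceq, Real.cosh_eq]
      calc ‖(Complex.exp (c * t) + Complex.exp (-(c * t))) / 2‖
          ≤ (‖Complex.exp (c * t)‖ + ‖Complex.exp (-(c * t))‖) / 2 := by
            rw [norm_div]
            simp only [Complex.norm_two]
            gcongr
            exact norm_add_le _ _
        _ = (Real.exp (x * t) + Real.exp (-(x * t))) / 2 := by
            rw [Complex.norm_exp, Complex.norm_exp, Complex.neg_re, hct]
    rw [norm_mul, hEabs]
    have h1 : Real.exp (-(a * t)) * Real.cosh (x * t) ≤ 1 := by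
      rw [Real.cosh_eq]
      have e1 : Real.exp (-(a*t)) * Real.exp (x*t) = Real.exp ((x - a) * t) := by
        rw [← Real.exp_add]; ring_nf
      have e2 : Real.exp (-(a*t)) * Real.exp (-(x*t)) = Real.exp ((-x - a) * t) := by
        rw [← Real.exp_add]; ring_nf
      have hb1 : Real.exp ((x - a) * t) ≤ 1 := by
        rw [Real.exp_le_one_iff]
        have : x ≤ a := (abs_le.mp hxa).2
        nlinarith
      have hb2 : Real.exp ((-x - a) * t) ≤ 1 := by
        rw [Real.exp_le_one_iff]
        have : -a ≤ x := (abs_le.mp hxa).1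
        nlinarith
      calc Real.exp (-(a*t)) * ((Real.exp (x*t) + Real.exp (-(x*t))) / 2)
          = (Real.exp ((x - a) * t) + Real.exp ((-x - a) * t)) / 2 := by
            rw [← e1, ← e2]; ring
        _ ≤ 1 := by linarith
    calc Real.exp (-(a * t)) * ‖Complex.cosh (c * t)‖
        ≤ Real.exp (-(a * t)) * Real.cosh (x * t) := by
          gcongr
      _ ≤ 1 := h1
      _ ≤ 2 := by norm_num
  · -- sinh bound
    rcases mul_eq_zero.mp him with hx0 | hy0
    · -- c purely imaginary: c = y * I
      have hcy : c = (y:ℂ) * Complex.I := by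
        apply Complex.ext <;> simp [← hx, ← hy, hx0]
      have hy0' : y ≠ 0 := by
        intro h0
        apply hc
        rw [hcy, h0]; simp
      have hyb : y ^ 2 = b ^ 2 - a ^ 2 := by rw [hx0] at hre; nlinarith
      have hba : a < b := by
        have : 0 < y ^ 2 := by positivity
        nlinarith
      have hmax : max a b = b := max_eq_right hba.le
      have hexpr : Complex.exp (-(a:ℂ) * t) * Complex.sinh (c * t) / c
          = ((Real.exp (-(a * t)) : ℝ) : ℂ) * (((Real.sin (y * t) : ℝ) : ℂ) * Complex.I)
            / (((y:ℝ) : ℂ) * Complex.I) := by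
        rw [hcy]
        have h1 : (y:ℂ) * Complex.I * (t:ℂ) = ((y * t : ℝ) : ℂ) * Complex.I := by
          push_cast; ring
        rw [h1, Complex.sinh_mul_I]
        congr 1
        congr 1
        · rw [show -(a:ℂ) * (t:ℂ) = ((-(a * t) : ℝ) : ℂ) by push_cast; ring,
            Complex.ofReal_exp]
        · rw [← Complex.ofReal_sin]
      rw [hexpr]
      simp only [norm_div, norm_mul, Complex.norm_I, Complex.norm_real, Real.norm_eq_abs, Real.abs_exp, mul_one]
      rw [hmax]
      have := sin_kernel_bound a b |y| t ha hb (abs_pos.mpr hy0') (by rw [sq_abs]; exact hyb) ht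
      have hyt : |Real.sin (y * t)| / |y| = |Real.sin (|y| * t)| / |y| := by
        rcases abs_choice y with h | h
        · rw [h]
        · rw [h]; rw [show -y * t = -(y * t) by ring, Real.sin_neg, abs_neg]
      calc Real.exp (-(a * t)) * |Real.sin (y * t)| / |y|
          = Real.exp (-(a * t)) * |Real.sin (|y| * t)| / |y| := by
            rw [mul_div_assoc, mul_div_assoc, hyt]
        _ ≤ 2 / b := this
    · -- c real: c = x
      have hcx : c = ((x:ℝ) : ℂ) := by
        apply Complex.ext <;> simp [← hx, ← hy, hy0]
      have hx0' : x ≠ 0 := by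
        intro h0; apply hc; rw [hcx, h0]; simp
      have hxb : x ^ 2 = a ^ 2 - b ^ 2 := by rw [hy0] at hre; nlinarith
      have hba : b < a := by
        have : 0 < x ^ 2 := by positivity
        nlinarith
      have hmax : max a b = a := max_eq_left hba.le
      have hexpr : Complex.exp (-(a:ℂ) * t) * Complex.sinh (c * t) / c
          = ((Real.exp (-(a * t)) * Real.sinh (x * t) / x : ℝ) : ℂ) := by
        rw [hcx]
        have h1 : ((x:ℝ) : ℂ) * (t:ℂ) = ((x * t : ℝ) : ℂ) := by push_cast; ring
        rw [h1, ← Complex.ofReal_sinh]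
        have h2 : Complex.exp (-(a:ℂ) * (t:ℂ)) = ((Real.exp (-(a * t)) : ℝ) : ℂ) := by
          rw [show -(a:ℂ) * (t:ℂ) = ((-(a * t) : ℝ) : ℂ) by push_cast; ring,
            Complex.ofReal_exp]
        rw [h2]
        push_cast
        ring
      rw [hexpr, Complex.norm_real, Real.norm_eq_abs, hmax]
      have hu : 0 < |x| := abs_pos.mpr hx0'
      have hua : |x| < a := by nlinarith [sq_abs x, abs_nonneg x]
      have key := sinh_kernel_bound a |x| t hu hua ht
      have heq : |Real.exp (-(a * t)) * Real.sinh (x * t) / x|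
          = Real.exp (-(a * t)) * Real.sinh (|x| * t) / |x| := by
        rw [abs_div, abs_mul, Real.abs_exp, Real.abs_sinh, abs_mul, abs_of_nonneg ht]
      rw [heq]
      exact key
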